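/- Fix 0 < δ₀ < 1/√2 and ε > 0. There exists N₀ such that for every N ≥ N₀ and every finite simple graph G on N vertices with positive average degree d̄ and relative rms degree fluctuation δ_rms ≤ δ₀, every unit eigenvector u of the adjacency matrix of G with negative eigenvalue satisfies (𝟙ᵀu)² ≤ (2·δ₀² + ε)·(N/2 − √(N−1)); here N/2 − √(N−1) is the uniform overlap of the negative eigenmode of the star graph on N vertices. -/

import Mathlib

/-- Fix `0 < δ₀ < 1/√2` and `ε > 0`. There exists `N₀` such that for
every `N ≥ N₀` and every finite simple graph `G` on `N` vertices with positive average
degree `d̄` and relative rms degree fluctuation `δ_rms ≤ δ₀`, every unit eigenvector of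
the adjacency matrix of `G` with negative eigenvalue satisfies
`(𝟙ᵀ u)² ≤ (2 δ₀² + ε) (N/2 - √(N-1))`, the right factor being the uniform overlap of
the negative eigenmode of the star graph on `N` vertices. -/
theorem stmt_9 (δ₀ ε : ℝ) (hδ₀ : 0 < δ₀) (hδ₀' : δ₀ < 1 / Real.sqrt 2) (hε : 0 < ε) :
    ∃ N₀ : ℕ, ∀ N : ℕ, N₀ ≤ N →
      ∀ (G : SimpleGraph (Fin N)) [DecidableRel G.Adj],
        ∀ dbar δrms : ℝ,
          dbar = (∑ i, (G.degree i : ℝ)) / N → 0 < dbar →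
          δrms = Real.sqrt ((1 / (N : ℝ)) * ∑ i, ((G.degree i : ℝ) - dbar) ^ 2) / dbar →
          δrms ≤ δ₀ →
          ∀ (u : Fin N → ℝ) (lam : ℝ),
            (∑ i, (u i) ^ 2 = 1) → (G.adjMatrix ℝ).mulVec u = lam • u → lam < 0 →
            (∑ i, u i) ^ 2 ≤ (2 * δ₀ ^ 2 + ε) * ((N : ℝ) / 2 - Real.sqrt ((N : ℝ) - 1)) := by
  set C : ℝ := 2 * δ₀ ^ 2 + ε with hC
  have hCpos : 0 < C := by positivity
  refine ⟨⌈(2 * C / ε) ^ 2⌉₊ + 1, fun N hN G _ dbar δrms hdbar hdpos hδrms hδle u lam hunit heig hlam => ?_⟩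
  have hN1 : 1 ≤ N := le_trans (Nat.le_add_left 1 _) hN
  have hNpos : (0:ℝ) < N := by exact_mod_cast hN1
  set s : ℝ := ∑ i, u i with hs
  -- Step A: ∑ d_j u_j = lam * s
  have hA : ∑ j, (G.degree j : ℝ) * u j = lam * s := by
    have h1 : dotProduct (fun _ => (1:ℝ)) ((G.adjMatrix ℝ).mulVec u)
        = dotProduct (Matrix.vecMul (fun _ => (1:ℝ)) (G.adjMatrix ℝ)) u :=
      Matrix.dotProduct_mulVec _ _ _
    rw [heig] at h1
    have hl : dotProduct (fun _ => (1:ℝ)) (lam • u) = lam * s := by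
      simp [dotProduct, hs, Finset.mul_sum]
    have hr : dotProduct (Matrix.vecMul (fun _ => (1:ℝ)) (G.adjMatrix ℝ)) u = ∑ j, (G.degree j : ℝ) * u j := by
      simp [dotProduct]
    rw [hl, hr] at h1
    exact h1.symm
  -- Step B
  have hB : ∑ j, ((G.degree j : ℝ) - dbar) * u j = (lam - dbar) * s := by
    have : ∑ j, ((G.degree j : ℝ) - dbar) * u j
        = (∑ j, (G.degree j : ℝ) * u j) - dbar * s := by
      rw [hs, Finset.mul_sum, ← Finset.sum_sub_distrib]
      congr 1; ext j; ring
    rw [this, hA]; ring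
  -- Step C: Cauchy–Schwarz
  set D : ℝ := ∑ i, ((G.degree i : ℝ) - dbar) ^ 2 with hD
  have hC_CS : ((lam - dbar) * s) ^ 2 ≤ D := by
    rw [← hB]
    calc (∑ j, ((G.degree j : ℝ) - dbar) * u j) ^ 2
        ≤ (∑ j, ((G.degree j : ℝ) - dbar) ^ 2) * (∑ j, (u j) ^ 2) :=
          Finset.sum_mul_sq_le_sq_mul_sq _ _ _
      _ = D := by rw [hunit, hD, mul_one]
  -- Step D: D ≤ δ₀² dbar² N
  have hDnonneg : (0:ℝ) ≤ D := Finset.sum_nonneg fun i _ => sq_nonneg _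
  have hDle : D ≤ δ₀ ^ 2 * dbar ^ 2 * N := by
    have hsq : Real.sqrt ((1 / (N : ℝ)) * D) ≤ δ₀ * dbar := by
      have := hδle
      rw [hδrms, div_le_iff₀ hdpos] at this
      exact this
    have h2 : (1 / (N : ℝ)) * D ≤ (δ₀ * dbar) ^ 2 := by
      have hnn : (0:ℝ) ≤ (1 / (N : ℝ)) * D := by positivity
      calc (1 / (N : ℝ)) * D = (Real.sqrt ((1 / (N : ℝ)) * D)) ^ 2 := (Real.sq_sqrt hnn).symm
        _ ≤ (δ₀ * dbar) ^ 2 := by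
            apply pow_le_pow_left₀ (Real.sqrt_nonneg _) hsq
    have := (mul_le_mul_iff_of_pos_right hNpos).mpr h2
    calc D = (1 / (N : ℝ)) * D * N := by field_simp
      _ ≤ (δ₀ * dbar) ^ 2 * N := this
      _ = δ₀ ^ 2 * dbar ^ 2 * N := by ring
  -- Step E: dbar² s² ≤ (lam - dbar)² s²
  have hE : dbar ^ 2 * s ^ 2 ≤ ((lam - dbar) * s) ^ 2 := by
    have h1 : dbar ^ 2 ≤ (lam - dbar) ^ 2 := by
      have : dbar ≤ dbar - lam := by linarith
      calc dbar ^ 2 ≤ (dbar - lam) ^ 2 := pow_le_pow_left₀ hdpos.le this 2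
        _ = (lam - dbar) ^ 2 := by ring
    calc dbar ^ 2 * s ^ 2 ≤ (lam - dbar) ^ 2 * s ^ 2 :=
          mul_le_mul_of_nonneg_right h1 (sq_nonneg s)
      _ = ((lam - dbar) * s) ^ 2 := by ring
  -- combine: s² ≤ δ₀² N
  have hs2 : s ^ 2 ≤ δ₀ ^ 2 * N := by
    have h1 : dbar ^ 2 * s ^ 2 ≤ δ₀ ^ 2 * dbar ^ 2 * N := le_trans hE (le_trans hC_CS hDle)
    have hd2 : (0:ℝ) < dbar ^ 2 := by positivity
    nlinarith [hd2]
  -- Step F: arithmetic on N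
  have hNbig : ((2 * C / ε) ^ 2 : ℝ) ≤ N := by
    have h1 : (⌈(2 * C / ε) ^ 2⌉₊ : ℝ) ≤ N := by
      exact_mod_cast le_trans (Nat.le_succ _) hN
    exact le_trans (Nat.le_ceil _) h1
  have hsqrtN : 2 * C / ε ≤ Real.sqrt N := by
    have : Real.sqrt ((2 * C / ε) ^ 2) ≤ Real.sqrt N := Real.sqrt_le_sqrt hNbig
    rwa [Real.sqrt_sq (by positivity)] at this
  have hsqrt1 : Real.sqrt ((N : ℝ) - 1) ≤ Real.sqrt N :=
    Real.sqrt_le_sqrt (by linarith)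
  have hfinal : C * Real.sqrt ((N : ℝ) - 1) ≤ ε * N / 2 := by
    have h1 : C * Real.sqrt ((N : ℝ) - 1) ≤ C * Real.sqrt N :=
      mul_le_mul_of_nonneg_left hsqrt1 hCpos.le
    have h2 : C ≤ ε / 2 * Real.sqrt N := by
      rw [div_le_iff₀ hε] at hsqrtN
      linarith
    have h3 : C * Real.sqrt N ≤ (ε / 2 * Real.sqrt N) * Real.sqrt N :=
      mul_le_mul_of_nonneg_right h2 (Real.sqrt_nonneg _)
    have h4 : Real.sqrt N * Real.sqrt N = N := Real.mul_self_sqrt hNpos.le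
    calc C * Real.sqrt ((N : ℝ) - 1) ≤ (ε / 2 * Real.sqrt N) * Real.sqrt N := le_trans h1 h3
      _ = ε / 2 * (Real.sqrt N * Real.sqrt N) := by ring
      _ = ε * N / 2 := by rw [h4]; ring
  calc s ^ 2 ≤ δ₀ ^ 2 * N := hs2
    _ ≤ C * ((N : ℝ) / 2 - Real.sqrt ((N : ℝ) - 1)) := by
        rw [hC]; nlinarith [hfinal]
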